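/- The path P_n is a minimal DPDP-graph if and only if n ∈ {4, 7, 10, 13}. -/

import Mathlib

open SimpleGraph

variable {V : Type*}

/-- `D` is a dominating set of `G`. -/
def Dominating (G : SimpleGraph V) (D : Set V) : Prop :=
  ∀ v ∉ D, ∃ u ∈ D, G.Adj v u

/-- `P` is a paired-dominating set of `G`: it is dominating and the induced
subgraph `G[P]` contains a perfect matching (given by an involutive pairing of
the vertices of `P` along edges inside `P`). -/
def PairedDominating (G : SimpleGraph V) (P : Set V) : Prop :=
  Dominating G P ∧ ∃ m : V → V, ∀ v ∈ P, m v ∈ P ∧ G.Adj v (m v) ∧ m (m v) = v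

/-- `(D, P)` is a DP-pair: a partition of the vertex set into a dominating set `D`
and a paired-dominating set `P`. -/
def IsDPPair (G : SimpleGraph V) (D P : Set V) : Prop :=
  Disjoint D P ∧ D ∪ P = Set.univ ∧ Dominating G D ∧ PairedDominating G P

/-- `G` is a DPDP-graph: its vertex set partitions into a dominating set and a
paired-dominating set. -/
def IsDPDP (G : SimpleGraph V) : Prop := ∃ D P, IsDPPair G D P

/-- A minimal DPDP-graph: a DPDP-graph no proper spanning subgraph of which is DPDP. -/
def IsMinimalDPDP (G : SimpleGraph V) : Prop :=
  IsDPDP G ∧ ∀ G' : SimpleGraph V, G' < G → ¬ IsDPDP G'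

/-- A leaf is a vertex of degree 1. -/
def IsLeaf (G : SimpleGraph V) (v : V) : Prop := (G.neighborSet v).ncard = 1

/-- A support vertex is a vertex adjacent to at least one leaf. -/
def IsSupport (G : SimpleGraph V) (v : V) : Prop := ∃ u, G.Adj v u ∧ IsLeaf G u

/-- the path graph on `Fin n` with the edge `(b-1, b)` removed for every
`b ≥ s` with `(b - s) % 4 = 0`. -/
def blockGraph (s n : ℕ) : SimpleGraph (Fin n) where
  Adj u v := (u.val + 1 = v.val ∧ ¬(s ≤ v.val ∧ (v.val - s) % 4 = 0)) ∨
             (v.val + 1 = u.val ∧ ¬(s ≤ u.val ∧ (u.val - s) % 4 = 0))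
  symm := ⟨by intro u v h; tauto⟩
  loopless := ⟨by intro v h; rcases h with ⟨h, -⟩ | ⟨h, -⟩ <;> omega⟩

lemma blockGraph_adj {s n : ℕ} {u v : Fin n} :
    (blockGraph s n).Adj u v ↔
      (u.val + 1 = v.val ∧ ¬(s ≤ v.val ∧ (v.val - s) % 4 = 0)) ∨
      (v.val + 1 = u.val ∧ ¬(s ≤ u.val ∧ (u.val - s) % 4 = 0)) := Iff.rfl

lemma blockGraph_le (s n : ℕ) : blockGraph s n ≤ pathGraph n := by
  intro u v h
  rw [pathGraph_adj]
  rcases h with ⟨h, -⟩ | ⟨h, -⟩ <;> omega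

lemma blockGraph_eq_path (s n : ℕ) (h : n ≤ s) : blockGraph s n = pathGraph n := by
  ext u v
  have hu := u.isLt
  have hv := v.isLt
  rw [blockGraph_adj, pathGraph_adj]
  constructor <;> intro h' <;> omega

lemma blockGraph_lt (s n : ℕ) (h4 : 4 ≤ s) (hn : s + 4 ≤ n) :
    blockGraph s n < pathGraph n := by
  refine lt_of_le_of_ne (blockGraph_le s n) (fun heq => ?_)
  have h1 : (pathGraph n).Adj ⟨s - 1, by omega⟩ ⟨s, by omega⟩ := by
    rw [pathGraph_adj]; simp; omega
  rw [← heq, blockGraph_adj] at h1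
  simp only [] at h1
  omega

lemma blockGraph_dpdp (s n : ℕ) (h4 : 4 ≤ s) (h3 : s % 3 = 1)
    (hn : ∃ k, n = s + 4 * k) : IsDPDP (blockGraph s n) := by
  obtain ⟨k, rfl⟩ := hn
  set n := s + 4 * k with hndef
  -- the dominating-set predicate
  refine ⟨{v : Fin n | (v.val < s ∧ v.val % 3 = 0) ∨
            (s ≤ v.val ∧ ((v.val - s) % 4 = 0 ∨ (v.val - s) % 4 = 3))},
          {v : Fin n | ¬((v.val < s ∧ v.val % 3 = 0) ∨
            (s ≤ v.val ∧ ((v.val - s) % 4 = 0 ∨ (v.val - s) % 4 = 3)))}, ?_, ?_, ?_, ?_, ?_⟩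
  · rw [Set.disjoint_left]
    intro a ha ha'
    exact ha' ha
  · ext v; simp [Set.mem_setOf_eq]; tauto
  · -- D dominating
    intro v hv
    simp only [Set.mem_setOf_eq] at hv
    have hvlt := v.isLt
    by_cases h1 : v.val < s
    · by_cases h2 : v.val % 3 = 1
      · exact ⟨⟨v.val - 1, by omega⟩, by simp only [Set.mem_setOf_eq, Fin.val_mk]; omega,
          by rw [blockGraph_adj]; simp only [Fin.val_mk, true_and]; omega⟩
      · exact ⟨⟨v.val + 1, by omega⟩, by simp only [Set.mem_setOf_eq, Fin.val_mk]; omega,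
          by rw [blockGraph_adj]; simp only [Fin.val_mk, true_and]; omega⟩
    · by_cases h2 : (v.val - s) % 4 = 1
      · exact ⟨⟨v.val - 1, by omega⟩, by simp only [Set.mem_setOf_eq, Fin.val_mk]; omega,
          by rw [blockGraph_adj]; simp only [Fin.val_mk, true_and]; omega⟩
      · exact ⟨⟨v.val + 1, by omega⟩, by simp only [Set.mem_setOf_eq, Fin.val_mk]; omega,
          by rw [blockGraph_adj]; simp only [Fin.val_mk, true_and]; omega⟩
  · -- P dominating
    intro v hv
    simp only [Set.mem_setOf_eq, not_not] at hv
    have hvlt := v.isLt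
    by_cases h1 : v.val < s
    · by_cases h2 : v.val + 1 < s
      · exact ⟨⟨v.val + 1, by omega⟩, by simp only [Set.mem_setOf_eq, Fin.val_mk]; omega,
          by rw [blockGraph_adj]; simp only [Fin.val_mk, true_and]; omega⟩
      · exact ⟨⟨v.val - 1, by omega⟩, by simp only [Set.mem_setOf_eq, Fin.val_mk]; omega,
          by rw [blockGraph_adj]; simp only [Fin.val_mk, true_and]; omega⟩
    · by_cases h2 : (v.val - s) % 4 = 0
      · exact ⟨⟨v.val + 1, by omega⟩, by simp only [Set.mem_setOf_eq, Fin.val_mk]; omega,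
          by rw [blockGraph_adj]; simp only [Fin.val_mk, true_and]; omega⟩
      · exact ⟨⟨v.val - 1, by omega⟩, by simp only [Set.mem_setOf_eq, Fin.val_mk]; omega,
          by rw [blockGraph_adj]; simp only [Fin.val_mk, true_and]; omega⟩
  · -- matching
    refine ⟨fun v => if h : (v.val < s ∧ v.val % 3 = 1) ∨ (s ≤ v.val ∧ (v.val - s) % 4 = 1)
      then ⟨v.val + 1, by have := v.isLt; omega⟩
      else ⟨v.val - 1, by have := v.isLt; omega⟩, ?_⟩
    intro v hv
    dsimp only
    simp only [Set.mem_setOf_eq] at hv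
    have hvlt := v.isLt
    by_cases hc : (v.val < s ∧ v.val % 3 = 1) ∨ (s ≤ v.val ∧ (v.val - s) % 4 = 1)
    · rw [dif_pos hc]
      have hcc : ¬((v.val + 1 < s ∧ (v.val + 1) % 3 = 1) ∨
          (s ≤ v.val + 1 ∧ (v.val + 1 - s) % 4 = 1)) := by omega
      refine ⟨by simp only [Set.mem_setOf_eq, Fin.val_mk]; omega,
        by rw [blockGraph_adj]; simp only [Fin.val_mk, true_and]; omega, ?_⟩
      rw [dif_neg hcc]
      exact Fin.ext (by simp only [Fin.val_mk]; omega)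
    · rw [dif_neg hc]
      have hcc : (v.val - 1 < s ∧ (v.val - 1) % 3 = 1) ∨
          (s ≤ v.val - 1 ∧ (v.val - 1 - s) % 4 = 1) := by omega
      refine ⟨by simp only [Set.mem_setOf_eq, Fin.val_mk]; omega,
        by rw [blockGraph_adj]; simp only [Fin.val_mk, true_and]; omega, ?_⟩
      rw [dif_pos hcc]
      exact Fin.ext (by simp only [Fin.val_mk]; omega)

lemma dpdp_path (n : ℕ) (h4 : 4 ≤ n) (h3 : n % 3 = 1) : IsDPDP (pathGraph n) := by
  have h := blockGraph_dpdp n n h4 h3 ⟨0, by ring⟩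
  rwa [blockGraph_eq_path n n le_rfl] at h

lemma missing_edge {n : ℕ} {G' : SimpleGraph (Fin n)} (hlt : G' < pathGraph n) :
    ∃ j, ∃ h : j + 1 < n, ¬ G'.Adj ⟨j, Nat.lt_of_succ_lt h⟩ ⟨j + 1, h⟩ := by
  by_contra hc
  push_neg at hc
  refine hlt.ne ?_
  ext u v
  constructor
  · exact fun h => hlt.le h
  · intro h
    rw [pathGraph_adj] at h
    rcases h with h | h
    · have := hc u.val (by omega)
      convert this using 2 <;> omega
    · have := (hc v.val (by omega)).symm
      convert this using 2 <;> omega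

lemma key (n : ℕ) (G' : SimpleGraph (Fin n)) (hle : G' ≤ pathGraph n)
    (hdp : IsDPDP G') :
    ∃ d e : ℕ → Prop,
      (∀ i, d i → i < n) ∧
      (∀ i, e i → i + 1 < n) ∧
      (∀ i (h : i + 1 < n), e i → G'.Adj ⟨i, Nat.lt_of_succ_lt h⟩ ⟨i + 1, h⟩) ∧
      (∀ i, i < n → ¬ d i → (0 < i ∧ d (i - 1) ∧ e (i - 1)) ∨ (d (i + 1) ∧ e i)) ∧
      (∀ i, i < n → d i → (0 < i ∧ ¬ d (i - 1) ∧ e (i - 1)) ∨ (¬ d (i + 1) ∧ e i)) ∧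
      (∀ i, i < n → ¬ d i → (0 < i ∧ ¬ d (i - 1) ∧ e (i - 1)) ∨ (¬ d (i + 1) ∧ e i)) := by
  classical
  obtain ⟨D, P, hdisj, huniv, hDdom, hPdom, m, hm⟩ := hdp
  set e : ℕ → Prop :=
    fun i => ∃ h : i + 1 < n, G'.Adj ⟨i, Nat.lt_of_succ_lt h⟩ ⟨i + 1, h⟩ with hedef
  have core : ∀ (X : Set (Fin n)) (i : ℕ) (hi : i < n) (u : Fin n),
      G'.Adj ⟨i, hi⟩ u → u ∈ X →
      (0 < i ∧ (∃ h : i - 1 < n, (⟨i - 1, h⟩ : Fin n) ∈ X) ∧ e (i - 1)) ∨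
      ((∃ h : i + 1 < n, (⟨i + 1, h⟩ : Fin n) ∈ X) ∧ e i) := by
    intro X i hi u hadj hX
    have hpa := hle hadj
    rw [pathGraph_adj] at hpa
    simp only [Fin.val_mk] at hpa
    rcases hpa with hpa | hpa
    · right
      have hu : u = ⟨i + 1, by omega⟩ := Fin.ext (by simp only [Fin.val_mk]; omega)
      rw [hu] at hadj hX
      exact ⟨⟨by omega, hX⟩, ⟨by omega, hadj⟩⟩
    · left
      have hu : u = ⟨i - 1, by omega⟩ := Fin.ext (by simp only [Fin.val_mk]; omega)
      rw [hu] at hadj hX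
      refine ⟨by omega, ⟨by omega, hX⟩, ⟨by omega, ?_⟩⟩
      have hieq : (⟨i - 1 + 1, by omega⟩ : Fin n) = ⟨i, hi⟩ := Fin.ext (by
        simp only [Fin.val_mk]; omega)
      rw [hieq]
      exact hadj.symm
  refine ⟨fun i => ∃ h : i < n, (⟨i, h⟩ : Fin n) ∈ D, e,
          fun i hi => hi.1, fun i he => he.1, fun i h he => he.2, ?_, ?_, ?_⟩
  · -- D dominates
    intro i hi hnd
    have hvD : (⟨i, hi⟩ : Fin n) ∉ D := fun hv => hnd ⟨hi, hv⟩
    obtain ⟨u, huD, hadj⟩ := hDdom _ hvD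
    exact core D i hi u hadj huD
  · -- P dominates
    intro i hi hd
    have hvD : (⟨i, hi⟩ : Fin n) ∈ D := hd.2
    have hvP : (⟨i, hi⟩ : Fin n) ∉ P := fun hvP => (Set.disjoint_left.mp hdisj hvD) hvP
    obtain ⟨u, huP, hadj⟩ := hPdom _ hvP
    have huD : u ∈ Dᶜ := fun huD => (Set.disjoint_left.mp hdisj huD) huP
    rcases core Dᶜ i hi u hadj huD with ⟨h0, ⟨hh, hmem⟩, he⟩ | ⟨⟨hh, hmem⟩, he⟩
    · exact Or.inl ⟨h0, fun ⟨hh', hm'⟩ => hmem hm', he⟩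
    · exact Or.inr ⟨fun ⟨hh', hm'⟩ => hmem hm', he⟩
  · -- pairing
    intro i hi hnd
    have hvD : (⟨i, hi⟩ : Fin n) ∉ D := fun hv => hnd ⟨hi, hv⟩
    have hvP : (⟨i, hi⟩ : Fin n) ∈ P := by
      have hu : (⟨i, hi⟩ : Fin n) ∈ D ∪ P := huniv ▸ Set.mem_univ _
      rcases hu with h | h
      · exact absurd h hvD
      · exact h
    obtain ⟨huP, hadj, -⟩ := hm _ hvP
    have huD : m ⟨i, hi⟩ ∈ Dᶜ := fun huD => (Set.disjoint_left.mp hdisj huD) huP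
    rcases core Dᶜ i hi _ hadj huD with ⟨h0, ⟨hh, hmem⟩, he⟩ | ⟨⟨hh, hmem⟩, he⟩
    · exact Or.inl ⟨h0, fun ⟨hh', hm'⟩ => hmem hm', he⟩
    · exact Or.inr ⟨fun ⟨hh', hm'⟩ => hmem hm', he⟩


-- per-n impossibility lemmas

lemma noDPDP1 (G' : SimpleGraph (Fin 1)) (hle : G' ≤ pathGraph 1) : ¬ IsDPDP G' := by
  intro hdp
  obtain ⟨d, e, hdr, her, -, hD, hQ, hM⟩ := key 1 G' hle hdp
  by_cases h0 : d 0
  · rcases hQ 0 (by omega) h0 with ⟨h, -, -⟩ | ⟨-, he0⟩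
    · omega
    · exact absurd (her 0 he0) (by omega)
  · rcases hD 0 (by omega) h0 with ⟨h, -, -⟩ | ⟨hd1, -⟩
    · omega
    · exact absurd (hdr 1 hd1) (by omega)

lemma noDPDP2 (G' : SimpleGraph (Fin 2)) (hle : G' ≤ pathGraph 2) : ¬ IsDPDP G' := by
  intro hdp
  obtain ⟨d, e, hdr, her, -, hD, hQ, hM⟩ := key 2 G' hle hdp
  have hd0 : d 0 := by
    by_contra h0
    rcases hD 0 (by omega) h0 with ⟨h, -, -⟩ | ⟨hd1, -⟩
    · omega
    rcases hM 0 (by omega) h0 with ⟨h, -, -⟩ | ⟨hnd1, -⟩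
    · omega
    exact hnd1 hd1
  rcases hQ 0 (by omega) hd0 with ⟨h, -, -⟩ | ⟨hnd1, he0⟩
  · omega
  rcases hM 1 (by omega) hnd1 with ⟨-, hnd0, -⟩ | ⟨-, he1⟩
  · exact hnd0 hd0
  · exact absurd (her 1 he1) (by omega)

lemma noDPDP3 (G' : SimpleGraph (Fin 3)) (hle : G' ≤ pathGraph 3) : ¬ IsDPDP G' := by
  intro hdp
  obtain ⟨d, e, hdr, her, -, hD, hQ, hM⟩ := key 3 G' hle hdp
  have hd0 : d 0 := by
    by_contra h0
    rcases hD 0 (by omega) h0 with ⟨h, -, -⟩ | ⟨hd1, -⟩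
    · omega
    rcases hM 0 (by omega) h0 with ⟨h, -, -⟩ | ⟨hnd1, -⟩
    · omega
    exact hnd1 hd1
  rcases hQ 0 (by omega) hd0 with ⟨h, -, -⟩ | ⟨hnd1, he0⟩
  · omega
  rcases hM 1 (by omega) hnd1 with ⟨-, hnd0, -⟩ | ⟨hnd2, he1⟩
  · exact hnd0 hd0
  rcases hD 2 (by omega) hnd2 with ⟨-, hd1, -⟩ | ⟨hd3, -⟩
  · exact hnd1 hd1
  · exact absurd (hdr 3 hd3) (by omega)

lemma noDPDP5 (G' : SimpleGraph (Fin 5)) (hle : G' ≤ pathGraph 5) : ¬ IsDPDP G' := by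
  intro hdp
  obtain ⟨d, e, hdr, her, -, hD, hQ, hM⟩ := key 5 G' hle hdp
  have hd0 : d 0 := by
    by_contra h0
    rcases hD 0 (by omega) h0 with ⟨h, -, -⟩ | ⟨hd1, -⟩
    · omega
    rcases hM 0 (by omega) h0 with ⟨h, -, -⟩ | ⟨hnd1, -⟩
    · omega
    exact hnd1 hd1
  rcases hQ 0 (by omega) hd0 with ⟨h, -, -⟩ | ⟨hnd1, he0⟩
  · omega
  rcases hM 1 (by omega) hnd1 with ⟨-, hnd0, -⟩ | ⟨hnd2, he1⟩
  · exact hnd0 hd0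
  rcases hD 2 (by omega) hnd2 with ⟨-, hd1, -⟩ | ⟨hd3, he2⟩
  · exact hnd1 hd1
  have hd4 : d 4 := by
    by_contra h4
    rcases hM 4 (by omega) h4 with ⟨-, hnd3, -⟩ | ⟨-, he4⟩
    · exact hnd3 hd3
    · exact absurd (her 4 he4) (by omega)
  rcases hQ 4 (by omega) hd4 with ⟨-, hnd3, -⟩ | ⟨-, he4⟩
  · exact hnd3 hd3
  · exact absurd (her 4 he4) (by omega)

lemma noDPDP6 (G' : SimpleGraph (Fin 6)) (hle : G' ≤ pathGraph 6) : ¬ IsDPDP G' := by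
  intro hdp
  obtain ⟨d, e, hdr, her, -, hD, hQ, hM⟩ := key 6 G' hle hdp
  have hd0 : d 0 := by
    by_contra h0
    rcases hD 0 (by omega) h0 with ⟨h, -, -⟩ | ⟨hd1, -⟩
    · omega
    rcases hM 0 (by omega) h0 with ⟨h, -, -⟩ | ⟨hnd1, -⟩
    · omega
    exact hnd1 hd1
  rcases hQ 0 (by omega) hd0 with ⟨h, -, -⟩ | ⟨hnd1, he0⟩
  · omega
  rcases hM 1 (by omega) hnd1 with ⟨-, hnd0, -⟩ | ⟨hnd2, he1⟩
  · exact hnd0 hd0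
  rcases hD 2 (by omega) hnd2 with ⟨-, hd1, -⟩ | ⟨hd3, he2⟩
  · exact hnd1 hd1
  have hd5 : d 5 := by
    by_contra h5
    rcases hM 5 (by omega) h5 with ⟨-, hnd4, -⟩ | ⟨-, he5⟩
    swap
    · exact absurd (her 5 he5) (by omega)
    rcases hD 5 (by omega) h5 with ⟨-, hd4, -⟩ | ⟨hd6, -⟩
    · exact hnd4 hd4
    · exact absurd (hdr 6 hd6) (by omega)
  rcases hQ 5 (by omega) hd5 with ⟨-, hnd4, he4⟩ | ⟨-, he5⟩
  swap
  · exact absurd (her 5 he5) (by omega)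
  rcases hM 4 (by omega) hnd4 with ⟨-, hnd3, -⟩ | ⟨hnd5, -⟩
  · exact hnd3 hd3
  · exact hnd5 hd5

lemma noDPDP9 (G' : SimpleGraph (Fin 9)) (hle : G' ≤ pathGraph 9) : ¬ IsDPDP G' := by
  intro hdp
  obtain ⟨d, e, hdr, her, -, hD, hQ, hM⟩ := key 9 G' hle hdp
  have hd0 : d 0 := by
    by_contra h0
    rcases hD 0 (by omega) h0 with ⟨h, -, -⟩ | ⟨hd1, -⟩
    · omega
    rcases hM 0 (by omega) h0 with ⟨h, -, -⟩ | ⟨hnd1, -⟩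
    · omega
    exact hnd1 hd1
  rcases hQ 0 (by omega) hd0 with ⟨h, -, -⟩ | ⟨hnd1, he0⟩
  · omega
  rcases hM 1 (by omega) hnd1 with ⟨-, hnd0, -⟩ | ⟨hnd2, he1⟩
  · exact hnd0 hd0
  rcases hD 2 (by omega) hnd2 with ⟨-, hd1, -⟩ | ⟨hd3, he2⟩
  · exact hnd1 hd1
  have hd8 : d 8 := by
    by_contra h8
    rcases hD 8 (by omega) h8 with ⟨-, hd7, -⟩ | ⟨hd9, -⟩
    swap
    · exact absurd (hdr 9 hd9) (by omega)
    rcases hM 8 (by omega) h8 with ⟨-, hnd7, -⟩ | ⟨-, he8⟩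
    · exact hnd7 hd7
    · exact absurd (her 8 he8) (by omega)
  rcases hQ 8 (by omega) hd8 with ⟨-, hnd7, he7⟩ | ⟨-, he8⟩
  swap
  · exact absurd (her 8 he8) (by omega)
  rcases hM 7 (by omega) hnd7 with ⟨-, hnd6, he6⟩ | ⟨hnd8, -⟩
  swap
  · exact hnd8 hd8
  rcases hD 6 (by omega) hnd6 with ⟨-, hd5, he5⟩ | ⟨hd7, -⟩
  swap
  · exact hnd7 hd7
  by_cases h4 : d 4
  · rcases hQ 4 (by omega) h4 with ⟨-, hnd3, -⟩ | ⟨hnd5, -⟩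
    · exact hnd3 hd3
    · exact hnd5 hd5
  · rcases hM 4 (by omega) h4 with ⟨-, hnd3, -⟩ | ⟨hnd5, -⟩
    · exact hnd3 hd3
    · exact hnd5 hd5

lemma noProper4 (G' : SimpleGraph (Fin 4)) (hlt : G' < pathGraph 4) : ¬ IsDPDP G' := by
  intro hdp
  obtain ⟨j, hj, hmiss⟩ := missing_edge hlt
  obtain ⟨d, e, hdr, her, hee, hD, hQ, hM⟩ := key 4 G' hlt.le hdp
  have hne : ¬ e j := fun hej => hmiss (hee j hj hej)
  have hd0 : d 0 := by
    by_contra h0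
    rcases hD 0 (by omega) h0 with ⟨h, -, -⟩ | ⟨hd1, -⟩
    · omega
    rcases hM 0 (by omega) h0 with ⟨h, -, -⟩ | ⟨hnd1, -⟩
    · omega
    exact hnd1 hd1
  rcases hQ 0 (by omega) hd0 with ⟨h, -, -⟩ | ⟨hnd1, he0⟩
  · omega
  rcases hM 1 (by omega) hnd1 with ⟨-, hnd0, -⟩ | ⟨hnd2, he1⟩
  · exact hnd0 hd0
  rcases hD 2 (by omega) hnd2 with ⟨-, hd1, -⟩ | ⟨hd3, he2⟩
  · exact hnd1 hd1
  have hjb : j ≤ 2 := by omega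
  have hjb : j ≤ 5 := by omega
  have hjb : j ≤ 8 := by omega
  have hjb : j ≤ 11 := by omega
  have : e j := by
    interval_cases j <;> assumption
  exact hne this

lemma noProper7 (G' : SimpleGraph (Fin 7)) (hlt : G' < pathGraph 7) : ¬ IsDPDP G' := by
  intro hdp
  obtain ⟨j, hj, hmiss⟩ := missing_edge hlt
  obtain ⟨d, e, hdr, her, hee, hD, hQ, hM⟩ := key 7 G' hlt.le hdp
  have hne : ¬ e j := fun hej => hmiss (hee j hj hej)
  have hd0 : d 0 := by
    by_contra h0
    rcases hD 0 (by omega) h0 with ⟨h, -, -⟩ | ⟨hd1, -⟩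
    · omega
    rcases hM 0 (by omega) h0 with ⟨h, -, -⟩ | ⟨hnd1, -⟩
    · omega
    exact hnd1 hd1
  rcases hQ 0 (by omega) hd0 with ⟨h, -, -⟩ | ⟨hnd1, he0⟩
  · omega
  rcases hM 1 (by omega) hnd1 with ⟨-, hnd0, -⟩ | ⟨hnd2, he1⟩
  · exact hnd0 hd0
  rcases hD 2 (by omega) hnd2 with ⟨-, hd1, -⟩ | ⟨hd3, he2⟩
  · exact hnd1 hd1
  have hd6 : d 6 := by
    by_contra h6
    rcases hD 6 (by omega) h6 with ⟨-, hd5, -⟩ | ⟨hd7, -⟩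
    swap
    · exact absurd (hdr 7 hd7) (by omega)
    rcases hM 6 (by omega) h6 with ⟨-, hnd5, -⟩ | ⟨-, he6⟩
    · exact hnd5 hd5
    · exact absurd (her 6 he6) (by omega)
  rcases hQ 6 (by omega) hd6 with ⟨-, hnd5, he5⟩ | ⟨-, he6⟩
  swap
  · exact absurd (her 6 he6) (by omega)
  rcases hM 5 (by omega) hnd5 with ⟨-, hnd4, he4⟩ | ⟨hnd6, -⟩
  swap
  · exact hnd6 hd6
  rcases hD 4 (by omega) hnd4 with ⟨-, -, he3⟩ | ⟨hd5, -⟩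
  swap
  · exact hnd5 hd5
  have hjb : j ≤ 5 := by omega
  have : e j := by
    interval_cases j <;> assumption
  exact hne this

lemma noProper10 (G' : SimpleGraph (Fin 10)) (hlt : G' < pathGraph 10) : ¬ IsDPDP G' := by
  intro hdp
  obtain ⟨j, hj, hmiss⟩ := missing_edge hlt
  obtain ⟨d, e, hdr, her, hee, hD, hQ, hM⟩ := key 10 G' hlt.le hdp
  have hne : ¬ e j := fun hej => hmiss (hee j hj hej)
  have hd0 : d 0 := by
    by_contra h0
    rcases hD 0 (by omega) h0 with ⟨h, -, -⟩ | ⟨hd1, -⟩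
    · omega
    rcases hM 0 (by omega) h0 with ⟨h, -, -⟩ | ⟨hnd1, -⟩
    · omega
    exact hnd1 hd1
  rcases hQ 0 (by omega) hd0 with ⟨h, -, -⟩ | ⟨hnd1, he0⟩
  · omega
  rcases hM 1 (by omega) hnd1 with ⟨-, hnd0, -⟩ | ⟨hnd2, he1⟩
  · exact hnd0 hd0
  rcases hD 2 (by omega) hnd2 with ⟨-, hd1, -⟩ | ⟨hd3, he2⟩
  · exact hnd1 hd1
  have hd9 : d 9 := by
    by_contra h9
    rcases hD 9 (by omega) h9 with ⟨-, hd8, -⟩ | ⟨hd10, -⟩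
    swap
    · exact absurd (hdr 10 hd10) (by omega)
    rcases hM 9 (by omega) h9 with ⟨-, hnd8, -⟩ | ⟨-, he9⟩
    · exact hnd8 hd8
    · exact absurd (her 9 he9) (by omega)
  rcases hQ 9 (by omega) hd9 with ⟨-, hnd8, he8⟩ | ⟨-, he9⟩
  swap
  · exact absurd (her 9 he9) (by omega)
  rcases hM 8 (by omega) hnd8 with ⟨-, hnd7, he7⟩ | ⟨hnd9, -⟩
  swap
  · exact hnd9 hd9
  rcases hD 7 (by omega) hnd7 with ⟨-, hd6, he6⟩ | ⟨hd8, -⟩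
  swap
  · exact hnd8 hd8
  have hnd4 : ¬ d 4 := by
    intro hd4
    rcases hQ 4 (by omega) hd4 with ⟨-, hnd3, -⟩ | ⟨hnd5, -⟩
    · exact hnd3 hd3
    rcases hM 5 (by omega) hnd5 with ⟨-, hnd4', -⟩ | ⟨hnd6, -⟩
    · exact hnd4' hd4
    · exact hnd6 hd6
  rcases hM 4 (by omega) hnd4 with ⟨-, hnd3, -⟩ | ⟨hnd5, he4⟩
  · exact hnd3 hd3
  rcases hD 4 (by omega) hnd4 with ⟨-, -, he3⟩ | ⟨hd5, -⟩
  swap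
  · exact hnd5 hd5
  rcases hD 5 (by omega) hnd5 with ⟨-, hd4, -⟩ | ⟨hd6', he5⟩
  · exact hnd4 hd4
  have hjb : j ≤ 8 := by omega
  have : e j := by
    interval_cases j <;> assumption
  exact hne this

lemma noProper13 (G' : SimpleGraph (Fin 13)) (hlt : G' < pathGraph 13) : ¬ IsDPDP G' := by
  intro hdp
  obtain ⟨j, hj, hmiss⟩ := missing_edge hlt
  obtain ⟨d, e, hdr, her, hee, hD, hQ, hM⟩ := key 13 G' hlt.le hdp
  have hne : ¬ e j := fun hej => hmiss (hee j hj hej)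
  have hd0 : d 0 := by
    by_contra h0
    rcases hD 0 (by omega) h0 with ⟨h, -, -⟩ | ⟨hd1, -⟩
    · omega
    rcases hM 0 (by omega) h0 with ⟨h, -, -⟩ | ⟨hnd1, -⟩
    · omega
    exact hnd1 hd1
  rcases hQ 0 (by omega) hd0 with ⟨h, -, -⟩ | ⟨hnd1, he0⟩
  · omega
  rcases hM 1 (by omega) hnd1 with ⟨-, hnd0, -⟩ | ⟨hnd2, he1⟩
  · exact hnd0 hd0
  rcases hD 2 (by omega) hnd2 with ⟨-, hd1, -⟩ | ⟨hd3, he2⟩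
  · exact hnd1 hd1
  have hd12 : d 12 := by
    by_contra h12
    rcases hD 12 (by omega) h12 with ⟨-, hd11, -⟩ | ⟨hd13, -⟩
    swap
    · exact absurd (hdr 13 hd13) (by omega)
    rcases hM 12 (by omega) h12 with ⟨-, hnd11, -⟩ | ⟨-, he12⟩
    · exact hnd11 hd11
    · exact absurd (her 12 he12) (by omega)
  rcases hQ 12 (by omega) hd12 with ⟨-, hnd11, he11⟩ | ⟨-, he12⟩
  swap
  · exact absurd (her 12 he12) (by omega)
  rcases hM 11 (by omega) hnd11 with ⟨-, hnd10, he10⟩ | ⟨hnd12, -⟩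
  swap
  · exact hnd12 hd12
  rcases hD 10 (by omega) hnd10 with ⟨-, hd9, he9⟩ | ⟨hd11, -⟩
  swap
  · exact hnd11 hd11
  -- middle: first rule out d 4
  have hnd4 : ¬ d 4 := by
    intro hd4
    rcases hQ 4 (by omega) hd4 with ⟨-, hnd3, -⟩ | ⟨hnd5, -⟩
    · exact hnd3 hd3
    rcases hM 5 (by omega) hnd5 with ⟨-, hnd4', -⟩ | ⟨hnd6, -⟩
    · exact hnd4' hd4
    rcases hD 6 (by omega) hnd6 with ⟨-, hd5, -⟩ | ⟨hd7, -⟩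
    · exact hnd5 hd5
    by_cases h8 : d 8
    · rcases hQ 8 (by omega) h8 with ⟨-, hnd7, -⟩ | ⟨hnd9, -⟩
      · exact hnd7 hd7
      · exact hnd9 hd9
    · rcases hM 8 (by omega) h8 with ⟨-, hnd7, -⟩ | ⟨hnd9, -⟩
      · exact hnd7 hd7
      · exact hnd9 hd9
  rcases hM 4 (by omega) hnd4 with ⟨-, hnd3, -⟩ | ⟨hnd5, he4⟩
  · exact hnd3 hd3
  rcases hD 4 (by omega) hnd4 with ⟨-, -, he3⟩ | ⟨hd5, -⟩
  swap
  · exact hnd5 hd5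
  rcases hD 5 (by omega) hnd5 with ⟨-, hd4, -⟩ | ⟨hd6, he5⟩
  · exact hnd4 hd4
  have hnd7 : ¬ d 7 := by
    intro hd7
    rcases hQ 7 (by omega) hd7 with ⟨-, hnd6, -⟩ | ⟨hnd8, -⟩
    · exact hnd6 hd6
    rcases hM 8 (by omega) hnd8 with ⟨-, hnd7', -⟩ | ⟨hnd9, -⟩
    · exact hnd7' hd7
    · exact hnd9 hd9
  rcases hM 7 (by omega) hnd7 with ⟨-, hnd6, -⟩ | ⟨hnd8, he7⟩
  · exact hnd6 hd6
  rcases hD 7 (by omega) hnd7 with ⟨-, -, he6⟩ | ⟨hd8, -⟩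
  swap
  · exact hnd8 hd8
  rcases hD 8 (by omega) hnd8 with ⟨-, hd7, -⟩ | ⟨-, he8⟩
  · exact hnd7 hd7
  have hjb : j ≤ 11 := by omega
  have : e j := by
    interval_cases j <;> assumption
  exact hne this

/-- The path `P_n` is a minimal DPDP-graph if and only if `n ∈ {4, 7, 10, 13}`. -/
theorem stmt11 (n : ℕ) (hn : 1 ≤ n) :
    IsMinimalDPDP (SimpleGraph.pathGraph n) ↔ n ∈ ({4, 7, 10, 13} : Set ℕ) := by
  constructor
  · intro h
    by_contra hmem
    simp only [Set.mem_insert_iff, Set.mem_singleton_iff] at hmem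
    push_neg at hmem
    obtain ⟨hn4, hn7, hn10, hn13⟩ := hmem
    obtain ⟨hdp, hmin⟩ := h
    have hcase : n = 1 ∨ n = 2 ∨ n = 3 ∨ n = 5 ∨ n = 6 ∨ n = 9 ∨
        (n % 4 = 0 ∧ 8 ≤ n) ∨ (n % 4 = 1 ∧ 17 ≤ n) ∨ (n % 4 = 2 ∧ 14 ≤ n) ∨
        (n % 4 = 3 ∧ 11 ≤ n) := by omega
    rcases hcase with rfl | rfl | rfl | rfl | rfl | rfl | ⟨hm, hb⟩ | ⟨hm, hb⟩ | ⟨hm, hb⟩ | ⟨hm, hb⟩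
    · exact noDPDP1 _ le_rfl hdp
    · exact noDPDP2 _ le_rfl hdp
    · exact noDPDP3 _ le_rfl hdp
    · exact noDPDP5 _ le_rfl hdp
    · exact noDPDP6 _ le_rfl hdp
    · exact noDPDP9 _ le_rfl hdp
    · exact hmin (blockGraph 4 n) (blockGraph_lt 4 n (by omega) (by omega))
        (blockGraph_dpdp 4 n (by omega) (by omega) ⟨(n - 4) / 4, by omega⟩)
    · exact hmin (blockGraph 13 n) (blockGraph_lt 13 n (by omega) (by omega))
        (blockGraph_dpdp 13 n (by omega) (by omega) ⟨(n - 13) / 4, by omega⟩)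
    · exact hmin (blockGraph 10 n) (blockGraph_lt 10 n (by omega) (by omega))
        (blockGraph_dpdp 10 n (by omega) (by omega) ⟨(n - 10) / 4, by omega⟩)
    · exact hmin (blockGraph 7 n) (blockGraph_lt 7 n (by omega) (by omega))
        (blockGraph_dpdp 7 n (by omega) (by omega) ⟨(n - 7) / 4, by omega⟩)
  · intro hmem
    simp only [Set.mem_insert_iff, Set.mem_singleton_iff] at hmem
    rcases hmem with rfl | rfl | rfl | rfl
    · exact ⟨dpdp_path 4 (by norm_num) (by norm_num), fun G' hlt => noProper4 G' hlt⟩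
    · exact ⟨dpdp_path 7 (by norm_num) (by norm_num), fun G' hlt => noProper7 G' hlt⟩
    · exact ⟨dpdp_path 10 (by norm_num) (by norm_num), fun G' hlt => noProper10 G' hlt⟩
    · exact ⟨dpdp_path 13 (by norm_num) (by norm_num), fun G' hlt => noProper13 G' hlt⟩
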